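/- Let f = (1/m) Σ_{i=1}^m f_i, where f is ℓ-strongly convex with ℓ > 0 and each f_i: ℝⁿ → ℝ is convex, differentiable, and has L-Lipschitz gradient, and let x* be the unique minimizer of f over ℝⁿ. Let Q be a random map on ℝⁿ such that for every w ∈ ℝⁿ, E[Q(w)] = w and E[‖Q(w)‖₂²] ≤ 2‖w‖₂², and let j be a uniformly random index in {1, …, m} independent of the randomness of Q. Then for all x, y ∈ ℝⁿ, the quantized SVRG update vector v = Q( ∇f_j(x) − ∇f_j(y) + ∇f(y) ) satisfies E[‖v‖₂²] ≤ 16·L·( f(x) − f(x*) + f(y) − f(x*) ). -/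

import Mathlib

open MeasureTheory ProbabilityTheory
open scoped RealInnerProductSpace

section Aux

variable {E : Type*} [NormedAddCommGroup E] [InnerProductSpace ℝ E] [CompleteSpace E]

/-- Directional derivative along a line, expressed via the gradient. -/
lemma aux_hasDerivAt_line (g : E → ℝ) (hg : Differentiable ℝ g) (w v : E) (t : ℝ) :
    HasDerivAt (fun s : ℝ => g (w + s • v)) ⟪gradient g (w + t • v), v⟫ t := by
  have hc : HasDerivAt (fun s : ℝ => w + s • v) v t := by
    simpa using ((hasDerivAt_id t).smul_const v).const_add w
  have hg' := (hg (w + t • v)).hasGradientAt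
  rw [hasGradientAt_iff_hasFDerivAt] at hg'
  have h := hg'.comp_hasDerivAt t hc
  simpa [Function.comp_def] using h

/-- Tangent line of a convex differentiable function lies below the graph. -/
lemma aux_convex_tangent (g : E → ℝ) (hconv : ConvexOn ℝ Set.univ g)
    (hg : Differentiable ℝ g) (w u : E) :
    g w + ⟪gradient g w, u - w⟫ ≤ g u := by
  set φ : ℝ → ℝ := fun t => g (w + t • (u - w)) with hφ
  have hφconv : ConvexOn ℝ Set.univ φ := by
    have h := hconv.comp_affineMap (AffineMap.lineMap w u : ℝ →ᵃ[ℝ] E)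
    have : Set.univ = (AffineMap.lineMap w u : ℝ →ᵃ[ℝ] E) ⁻¹' Set.univ := by simp
    rw [this]
    convert h using 1
    iterate 4 rfl
    funext t
    simp [hφ, Function.comp, AffineMap.lineMap_apply, add_comm, vsub_eq_sub, vadd_eq_add]
  have hd : HasDerivAt φ ⟪gradient g w, u - w⟫ 0 := by
    have := aux_hasDerivAt_line g hg w (u - w) 0
    simpa using this
  have hs := hφconv.le_slope_of_hasDerivAt (Set.mem_univ (0:ℝ)) (Set.mem_univ (1:ℝ))
    one_pos hd
  have hslope : slope φ 0 1 = g u - g w := by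
    rw [slope_def_field]
    simp [hφ]
  rw [hslope] at hs
  linarith

/-- Descent lemma: quadratic upper bound from a Lipschitz gradient. -/
lemma aux_descent (g : E → ℝ) (hg : Differentiable ℝ g) {L : NNReal}
    (hL : LipschitzWith L (gradient g)) (z u : E) :
    g u ≤ g z + ⟪gradient g z, u - z⟫ + (L : ℝ) / 2 * ‖u - z‖ ^ 2 := by
  set v := u - z with hv
  have hder : ∀ t : ℝ, HasDerivAt (fun s : ℝ => g (z + s • v))
      ⟪gradient g (z + t • v), v⟫ t := fun t => aux_hasDerivAt_line g hg z v t
  have hcont : Continuous fun t : ℝ => ⟪gradient g (z + t • v), v⟫ :=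
    Continuous.inner (hL.continuous.comp
      (continuous_const.add (continuous_id.smul continuous_const))) continuous_const
  have key : g (z + (1:ℝ) • v) - g (z + (0:ℝ) • v)
      = ∫ t in (0:ℝ)..1, ⟪gradient g (z + t • v), v⟫ :=
    (intervalIntegral.integral_eq_sub_of_hasDerivAt (fun t _ => hder t)
      (hcont.intervalIntegrable 0 1)).symm
  have hbound : ∀ t ∈ Set.Icc (0:ℝ) 1,
      ⟪gradient g (z + t • v), v⟫ ≤ ⟪gradient g z, v⟫ + ((L : ℝ) * ‖v‖ ^ 2) * t := by
    intro t ht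
    have h1 : ⟪gradient g (z + t • v) - gradient g z, v⟫
        ≤ ‖gradient g (z + t • v) - gradient g z‖ * ‖v‖ := real_inner_le_norm _ _
    have h2 : ‖gradient g (z + t • v) - gradient g z‖ ≤ (L : ℝ) * (t * ‖v‖) := by
      have := hL.dist_le_mul (z + t • v) z
      rw [dist_eq_norm, dist_eq_norm] at this
      have he : z + t • v - z = t • v := by abel
      rw [he, norm_smul, Real.norm_eq_abs, abs_of_nonneg ht.1] at this
      exact this
    have h3 : ⟪gradient g (z + t • v), v⟫
        = ⟪gradient g z, v⟫ + ⟪gradient g (z + t • v) - gradient g z, v⟫ := by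
      rw [inner_sub_left]; ring
    have hvnn : (0:ℝ) ≤ ‖v‖ := norm_nonneg _
    nlinarith [mul_le_mul_of_nonneg_right h2 hvnn]
  have hmono : ∫ t in (0:ℝ)..1, ⟪gradient g (z + t • v), v⟫
      ≤ ∫ t in (0:ℝ)..1, (⟪gradient g z, v⟫ + ((L : ℝ) * ‖v‖ ^ 2) * t) := by
    apply intervalIntegral.integral_mono_on zero_le_one (hcont.intervalIntegrable 0 1)
      ((continuous_const.add (continuous_const.mul continuous_id')).intervalIntegrable 0 1)
    exact hbound
  have hval : ∫ t in (0:ℝ)..1, (⟪gradient g z, v⟫ + ((L : ℝ) * ‖v‖ ^ 2) * t)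
      = ⟪gradient g z, v⟫ + (L : ℝ) / 2 * ‖v‖ ^ 2 := by
    rw [intervalIntegral.integral_add (g := fun t => ((L:ℝ) * ‖v‖ ^ 2) * t) intervalIntegrable_const
      ((continuous_const.mul continuous_id').intervalIntegrable 0 1 :
        IntervalIntegrable (fun t : ℝ => ((L : ℝ) * ‖v‖ ^ 2) * t) MeasureTheory.volume 0 1),
      intervalIntegral.integral_const, intervalIntegral.integral_const_mul, integral_id]
    simp
    ring
  have e1 : z + (1:ℝ) • v = u := by rw [hv]; simp
  have e0 : z + (0:ℝ) • v = z := by simp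
  rw [e1, e0] at key
  rw [hval] at hmono
  linarith [key ▸ hmono]

/-- Cocoercivity-type bound: squared gradient difference controlled by Bregman gap. -/
lemma aux_cocoercive (g : E → ℝ) (hconv : ConvexOn ℝ Set.univ g)
    (hg : Differentiable ℝ g) {L : NNReal} (hL : LipschitzWith L (gradient g)) (w z : E) :
    ‖gradient g z - gradient g w‖ ^ 2
      ≤ 2 * (L : ℝ) * (g z - g w - ⟪gradient g w, z - w⟫) := by
  by_cases hL0 : (L : ℝ) = 0
  · have heq : gradient g z = gradient g w := by
      have := hL.dist_le_mul z w
      rw [hL0, zero_mul] at this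
      exact dist_le_zero.mp this
    simp [heq, hL0]
  · have hLpos : (0:ℝ) < (L : ℝ) := lt_of_le_of_ne L.coe_nonneg (Ne.symm hL0)
    set d := gradient g z - gradient g w with hd
    set u := z - (L : ℝ)⁻¹ • d with hu
    have h1 := aux_descent g hg hL z u
    have h2 := aux_convex_tangent g hconv hg w u
    have e1 : u - z = -((L : ℝ)⁻¹ • d) := by rw [hu]; abel
    have e2 : u - w = (z - w) - (L : ℝ)⁻¹ • d := by rw [hu]; abel
    have hi1 : ⟪gradient g z, u - z⟫ = -((L : ℝ)⁻¹ * ⟪gradient g z, d⟫) := by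
      rw [e1, inner_neg_right, real_inner_smul_right]
    have hn1 : ‖u - z‖ ^ 2 = ((L : ℝ)⁻¹) ^ 2 * ‖d‖ ^ 2 := by
      rw [e1, norm_neg, norm_smul, Real.norm_eq_abs, abs_of_nonneg (by positivity), mul_pow]
    have hi2 : ⟪gradient g w, u - w⟫
        = ⟪gradient g w, z - w⟫ - (L : ℝ)⁻¹ * ⟪gradient g w, d⟫ := by
      rw [e2, inner_sub_right, real_inner_smul_right]
    have hiden : ⟪gradient g z, d⟫ - ⟪gradient g w, d⟫ = ‖d‖ ^ 2 := by
      rw [← inner_sub_left, ← hd, real_inner_self_eq_norm_sq]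
    rw [hi1, hn1] at h1
    rw [hi2] at h2
    have h3 : (L : ℝ)⁻¹ * ⟪gradient g z, d⟫ - (L : ℝ)⁻¹ * ⟪gradient g w, d⟫
        - (L : ℝ) / 2 * (((L : ℝ)⁻¹) ^ 2 * ‖d‖ ^ 2)
        ≤ g z - g w - ⟪gradient g w, z - w⟫ := by linarith
    have h7 : (L : ℝ)⁻¹ * ⟪gradient g z, d⟫ - (L : ℝ)⁻¹ * ⟪gradient g w, d⟫
        = (L : ℝ)⁻¹ * ‖d‖ ^ 2 := by rw [← mul_sub, hiden]
    have h8 : (L : ℝ) / 2 * (((L : ℝ)⁻¹) ^ 2 * ‖d‖ ^ 2) = (L : ℝ)⁻¹ / 2 * ‖d‖ ^ 2 := by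
      field_simp
    have h9 : (L : ℝ)⁻¹ / 2 * ‖d‖ ^ 2 ≤ g z - g w - ⟪gradient g w, z - w⟫ := by linarith
    have h10 := mul_le_mul_of_nonneg_left h9 (by positivity : (0:ℝ) ≤ 2 * (L : ℝ))
    have h11 : 2 * (L : ℝ) * ((L : ℝ)⁻¹ / 2 * ‖d‖ ^ 2) = ‖d‖ ^ 2 := by
      field_simp
    linarith

end Aux

set_option maxHeartbeats 2000000 in
/-- **Second moment bound for the quantized SVRG update.**
With `f = (1/m) ∑ᵢ fᵢ`, `f` `ℓ`-strongly convex, each `fᵢ` convex with `L`-Lipschitz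
gradient, unique minimizer `x*`, and a stochastic quantization kernel `Q` satisfying
`E[Q(w)] = w` and `E[‖Q(w)‖₂²] ≤ 2‖w‖₂²`, the quantized SVRG update
`v = Q(∇f_j(x) − ∇f_j(y) + ∇f(y))` (with `j` uniform and independent of the
quantization randomness) satisfies
`E[‖v‖₂²] ≤ 16 L (f(x) − f(x*) + f(y) − f(x*))`. -/
theorem qsvrg_update_second_moment (n m : ℕ) (hm : 1 ≤ m)
    (f : Fin m → EuclideanSpace ℝ (Fin n) → ℝ)
    (hconv : ∀ i, ConvexOn ℝ Set.univ (f i))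
    (hdiff : ∀ i, Differentiable ℝ (f i))
    (L : NNReal) (hL : ∀ i, LipschitzWith L (gradient (f i)))
    (F : EuclideanSpace ℝ (Fin n) → ℝ)
    (hF : F = fun z => (m : ℝ)⁻¹ * ∑ i, f i z)
    (ℓ : ℝ) (hℓ : 0 < ℓ)
    (hsc : ∀ x y : EuclideanSpace ℝ (Fin n),
      F x + ⟪gradient F x, y - x⟫ + ℓ / 2 * ‖y - x‖ ^ 2 ≤ F y)
    (xstar : EuclideanSpace ℝ (Fin n)) (hmin : ∀ y, F xstar ≤ F y)
    (huniq : ∀ z, (∀ y, F z ≤ F y) → z = xstar)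
    {Ω : Type*} [MeasurableSpace Ω] (μ' : Measure Ω) [IsProbabilityMeasure μ']
    (Q : EuclideanSpace ℝ (Fin n) → Ω → EuclideanSpace ℝ (Fin n))
    (hQmeas : ∀ w, Measurable (Q w))
    (hQint : ∀ w, Integrable (Q w) μ')
    (hQsqint : ∀ w, Integrable (fun ω => ‖Q w ω‖ ^ 2) μ')
    (hQmean : ∀ w, ∫ ω, Q w ω ∂μ' = w)
    (hQmom : ∀ w, ∫ ω, ‖Q w ω‖ ^ 2 ∂μ' ≤ 2 * ‖w‖ ^ 2)
    (x y : EuclideanSpace ℝ (Fin n)) :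
    haveI : Nonempty (Fin m) := ⟨⟨0, hm⟩⟩
    ∫ p, ‖Q (gradient (f p.1) x - gradient (f p.1) y + gradient F y) p.2‖ ^ 2
        ∂((PMF.uniformOfFintype (Fin m)).toMeasure.prod μ')
      ≤ 16 * (L : ℝ) * ((F x - F xstar) + (F y - F xstar)) := by
  haveI : Nonempty (Fin m) := ⟨⟨0, hm⟩⟩
  have hm0 : (m : ℝ) ≠ 0 := Nat.cast_ne_zero.mpr (by omega)
  have hminv : (0:ℝ) ≤ (m : ℝ)⁻¹ := by positivity
  -- gradient of F
  have hFgrad : ∀ z : EuclideanSpace ℝ (Fin n), HasGradientAt F ((m : ℝ)⁻¹ • ∑ i, gradient (f i) z) z := by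
    intro z
    have hfd : ∀ i : Fin m, HasFDerivAt (f i)
        (InnerProductSpace.toDualMap ℝ (EuclideanSpace ℝ (Fin n)) (gradient (f i) z)) z := fun i => by
      have := ((hdiff i) z).hasGradientAt
      rwa [hasGradientAt_iff_hasFDerivAt] at this
    have hsum : HasFDerivAt (fun z : EuclideanSpace ℝ (Fin n) => ∑ i, f i z)
        (∑ i, InnerProductSpace.toDualMap ℝ (EuclideanSpace ℝ (Fin n)) (gradient (f i) z)) z :=
      HasFDerivAt.fun_sum (fun i _ => hfd i)
    have hc : HasFDerivAt F
        ((m : ℝ)⁻¹ • ∑ i, InnerProductSpace.toDualMap ℝ (EuclideanSpace ℝ (Fin n)) (gradient (f i) z)) z := by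
      rw [hF]; exact hsum.const_mul _
    rw [hasGradientAt_iff_hasFDerivAt]
    convert hc using 1
    iterate 2 rfl
    apply ContinuousLinearMap.ext
    intro v
    simp [InnerProductSpace.toDualMap_apply_apply, InnerProductSpace.toDual_apply_apply, real_inner_smul_left, sum_inner]
  have hgradF : ∀ z : EuclideanSpace ℝ (Fin n), gradient F z = (m : ℝ)⁻¹ • ∑ i, gradient (f i) z :=
    fun z => (hFgrad z).gradient
  have hFdiff : Differentiable ℝ F := fun z => (hFgrad z).differentiableAt
  -- gradient at minimizer vanishes
  have hgrad0 : gradient F xstar = 0 := by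
    have hloc : IsLocalMin F xstar := Filter.Eventually.of_forall hmin
    have h0 : fderiv ℝ F xstar = 0 := hloc.fderiv_eq_zero
    have hG : HasGradientAt F 0 xstar := by
      rw [hasGradientAt_iff_hasFDerivAt]
      have := (hFdiff xstar).hasFDerivAt
      rw [h0] at this
      simpa [map_zero] using this
    exact hG.gradient
  have hsum0 : ∑ i, gradient (f i) xstar = 0 := by
    have h := (hgradF xstar).symm.trans hgrad0
    rcases smul_eq_zero.mp h with h | h
    · exact absurd h (inv_ne_zero hm0)
    · exact h
  -- averaged cocoercivity bound
  have hkey : ∀ z : EuclideanSpace ℝ (Fin n), (m : ℝ)⁻¹ * ∑ i, ‖gradient (f i) z - gradient (f i) xstar‖ ^ 2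
      ≤ 2 * (L : ℝ) * (F z - F xstar) := by
    intro z
    have hsum : ∑ i, ‖gradient (f i) z - gradient (f i) xstar‖ ^ 2
        ≤ ∑ i, 2 * (L : ℝ) * (f i z - f i xstar - ⟪gradient (f i) xstar, z - xstar⟫) :=
      Finset.sum_le_sum fun i _ => aux_cocoercive (f i) (hconv i) (hdiff i) (hL i) xstar z
    have hrhs : ∑ i, 2 * (L : ℝ) * (f i z - f i xstar - ⟪gradient (f i) xstar, z - xstar⟫)
        = 2 * (L : ℝ) * ((∑ i, f i z) - (∑ i, f i xstar)) := by
      rw [← Finset.mul_sum]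
      congr 1
      rw [Finset.sum_sub_distrib, Finset.sum_sub_distrib, ← sum_inner, hsum0,
        inner_zero_left, sub_zero]
    calc (m : ℝ)⁻¹ * ∑ i, ‖gradient (f i) z - gradient (f i) xstar‖ ^ 2
        ≤ (m : ℝ)⁻¹ * ∑ i, 2 * (L : ℝ) * (f i z - f i xstar
            - ⟪gradient (f i) xstar, z - xstar⟫) :=
          mul_le_mul_of_nonneg_left hsum hminv
      _ = 2 * (L : ℝ) * (F z - F xstar) := by rw [hrhs, hF]; ring
  -- notation for the update vectors
  set W : Fin m → EuclideanSpace ℝ (Fin n) := fun j => gradient (f j) x - gradient (f j) y + gradient F y with hW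
  set a : Fin m → EuclideanSpace ℝ (Fin n) := fun j => gradient (f j) x - gradient (f j) xstar with ha
  set b : Fin m → EuclideanSpace ℝ (Fin n) := fun j => gradient (f j) y - gradient (f j) xstar with hb
  set c : EuclideanSpace ℝ (Fin n) := gradient F y with hc
  have hcb : c = (m : ℝ)⁻¹ • ∑ j, b j := by
    rw [hc, hgradF y]
    congr 1
    rw [hb]
    rw [Finset.sum_sub_distrib, hsum0, sub_zero]
  -- variance reduction: ∑ ‖b j - c‖² ≤ ∑ ‖b j‖²
  have hvar : ∑ j, ‖b j - c‖ ^ 2 ≤ ∑ j, ‖b j‖ ^ 2 := by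
    set S : EuclideanSpace ℝ (Fin n) := ∑ j, b j with hS
    have hexp : ∑ j, ‖b j - c‖ ^ 2
        = (∑ j, ‖b j‖ ^ 2) - 2 * ⟪S, c⟫ + (m : ℝ) * ‖c‖ ^ 2 := by
      have : ∀ j : Fin m, ‖b j - c‖ ^ 2 = ‖b j‖ ^ 2 - 2 * ⟪b j, c⟫ + ‖c‖ ^ 2 :=
        fun j => norm_sub_sq_real _ _
      rw [Finset.sum_congr rfl (fun j _ => this j)]
      rw [Finset.sum_add_distrib, Finset.sum_sub_distrib, Finset.sum_const,
        Finset.card_univ, Fintype.card_fin, ← Finset.mul_sum, ← sum_inner, nsmul_eq_mul]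
    have hSc : ⟪S, c⟫ = (m : ℝ)⁻¹ * ‖S‖ ^ 2 := by
      rw [hcb, real_inner_smul_right, real_inner_self_eq_norm_sq]
    have hcnorm : ‖c‖ ^ 2 = ((m : ℝ)⁻¹) ^ 2 * ‖S‖ ^ 2 := by
      rw [hcb, norm_smul, Real.norm_eq_abs, abs_of_nonneg hminv, mul_pow]
    rw [hexp, hSc, hcnorm]
    have hmm : (m : ℝ) * ((m : ℝ)⁻¹) ^ 2 = (m : ℝ)⁻¹ := by
      field_simp
    have hSnn : (0:ℝ) ≤ ‖S‖ ^ 2 := sq_nonneg _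
    nlinarith [mul_nonneg hminv hSnn]
  -- pointwise bound on ‖W j‖²
  have hWptwise : ∀ j, ‖W j‖ ^ 2 ≤ 2 * ‖a j‖ ^ 2 + 2 * ‖b j - c‖ ^ 2 := by
    intro j
    have hWeq : W j = a j - (b j - c) := by
      show gradient (f j) x - gradient (f j) y + c = (gradient (f j) x - gradient (f j) xstar) - ((gradient (f j) y - gradient (f j) xstar) - c)
      abel
    rw [hWeq]
    have h1 : ‖a j - (b j - c)‖ ≤ ‖a j‖ + ‖b j - c‖ := norm_sub_le _ _
    have h2 : ‖a j - (b j - c)‖ ^ 2 ≤ (‖a j‖ + ‖b j - c‖) ^ 2 :=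
      pow_le_pow_left₀ (norm_nonneg _) h1 2
    nlinarith [h2, sq_nonneg (‖a j‖ - ‖b j - c‖)]
  -- deterministic bound
  have hxnn : (0:ℝ) ≤ F x - F xstar := sub_nonneg.mpr (hmin x)
  have hynn : (0:ℝ) ≤ F y - F xstar := sub_nonneg.mpr (hmin y)
  have hdet : (m : ℝ)⁻¹ * ∑ j, 2 * ‖W j‖ ^ 2
      ≤ 16 * (L : ℝ) * ((F x - F xstar) + (F y - F xstar)) := by
    have h1 : ∑ j, 2 * ‖W j‖ ^ 2
        ≤ ∑ j, (4 * ‖a j‖ ^ 2 + 4 * ‖b j - c‖ ^ 2) :=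
      Finset.sum_le_sum fun j _ => by nlinarith [hWptwise j]
    have h2 : (m : ℝ)⁻¹ * ∑ j, 2 * ‖W j‖ ^ 2
        ≤ 4 * ((m : ℝ)⁻¹ * ∑ j, ‖a j‖ ^ 2) + 4 * ((m : ℝ)⁻¹ * ∑ j, ‖b j - c‖ ^ 2) := by
      have := mul_le_mul_of_nonneg_left h1 hminv
      rw [Finset.sum_add_distrib] at this
      calc (m : ℝ)⁻¹ * ∑ j, 2 * ‖W j‖ ^ 2
          ≤ (m : ℝ)⁻¹ * ((∑ j, 4 * ‖a j‖ ^ 2) + ∑ j, 4 * ‖b j - c‖ ^ 2) := this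
        _ = 4 * ((m : ℝ)⁻¹ * ∑ j, ‖a j‖ ^ 2) + 4 * ((m : ℝ)⁻¹ * ∑ j, ‖b j - c‖ ^ 2) := by
            rw [← Finset.mul_sum, ← Finset.mul_sum]
            ring
    have h3 : (m : ℝ)⁻¹ * ∑ j, ‖a j‖ ^ 2 ≤ 2 * (L : ℝ) * (F x - F xstar) := hkey x
    have h4 : (m : ℝ)⁻¹ * ∑ j, ‖b j - c‖ ^ 2 ≤ (m : ℝ)⁻¹ * ∑ j, ‖b j‖ ^ 2 :=
      mul_le_mul_of_nonneg_left hvar hminv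
    have h5 : (m : ℝ)⁻¹ * ∑ j, ‖b j‖ ^ 2 ≤ 2 * (L : ℝ) * (F y - F xstar) := hkey y
    nlinarith [mul_nonneg L.coe_nonneg hxnn, mul_nonneg L.coe_nonneg hynn]
  -- probabilistic part
  show ∫ p, ‖Q (gradient (f p.1) x - gradient (f p.1) y + gradient F y) p.2‖ ^ 2
      ∂((PMF.uniformOfFintype (Fin m)).toMeasure.prod μ')
    ≤ 16 * (L : ℝ) * ((F x - F xstar) + (F y - F xstar))
  have hGmeas : Measurable (fun p : Fin m × Ω => ‖Q (W p.1) p.2‖ ^ 2) := by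
    have h : Measurable (fun q : Ω × Fin m => ‖Q (W q.2) q.1‖ ^ 2) :=
      measurable_from_prod_countable_left fun j => ((hQmeas (W j)).norm.pow_const 2)
    have heq : (fun p : Fin m × Ω => ‖Q (W p.1) p.2‖ ^ 2)
        = (fun q : Ω × Fin m => ‖Q (W q.2) q.1‖ ^ 2) ∘ Prod.swap := rfl
    rw [heq]
    exact h.comp measurable_swap
  have hGint : Integrable (fun p : Fin m × Ω => ‖Q (W p.1) p.2‖ ^ 2)
      ((PMF.uniformOfFintype (Fin m)).toMeasure.prod μ') := by
    rw [integrable_prod_iff hGmeas.aestronglyMeasurable]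
    exact ⟨Filter.Eventually.of_forall fun j => hQsqint (W j), Integrable.of_finite⟩
  have hfubini : ∫ p, ‖Q (W p.1) p.2‖ ^ 2
        ∂((PMF.uniformOfFintype (Fin m)).toMeasure.prod μ')
      = ∫ j, (∫ ω, ‖Q (W j) ω‖ ^ 2 ∂μ') ∂(PMF.uniformOfFintype (Fin m)).toMeasure :=
    integral_prod _ hGint
  have hmono : ∫ j, (∫ ω, ‖Q (W j) ω‖ ^ 2 ∂μ') ∂(PMF.uniformOfFintype (Fin m)).toMeasure
      ≤ ∫ j, 2 * ‖W j‖ ^ 2 ∂(PMF.uniformOfFintype (Fin m)).toMeasure :=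
    integral_mono Integrable.of_finite Integrable.of_finite fun j => hQmom (W j)
  have hsum : ∫ j, 2 * ‖W j‖ ^ 2 ∂(PMF.uniformOfFintype (Fin m)).toMeasure
      = (m : ℝ)⁻¹ * ∑ j, 2 * ‖W j‖ ^ 2 := by
    rw [PMF.integral_eq_sum]
    simp only [PMF.uniformOfFintype_apply, Fintype.card_fin, ENNReal.toReal_inv,
      ENNReal.toReal_natCast, smul_eq_mul]
    rw [Finset.mul_sum]
  calc ∫ p, ‖Q (W p.1) p.2‖ ^ 2 ∂((PMF.uniformOfFintype (Fin m)).toMeasure.prod μ')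
      = ∫ j, (∫ ω, ‖Q (W j) ω‖ ^ 2 ∂μ') ∂(PMF.uniformOfFintype (Fin m)).toMeasure := hfubini
    _ ≤ ∫ j, 2 * ‖W j‖ ^ 2 ∂(PMF.uniformOfFintype (Fin m)).toMeasure := hmono
    _ = (m : ℝ)⁻¹ * ∑ j, 2 * ‖W j‖ ^ 2 := hsum
    _ ≤ 16 * (L : ℝ) * ((F x - F xstar) + (F y - F xstar)) := hdet
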